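/- Kernel of the linearized operator: Let M_Ω be the equilibrium density with orientation Ω₀ and define L g = div_v{ M_Ω ∇_v( g/M_Ω − c₀⁻¹ (P_{Ω₀⊥}v)·(P_{Ω₀⊥} j_g) ) } with j_g = ∫ v g dv and c₀ = ∫ (v·Ω₀) M_Ω dv (assumed to satisfy ∫ v ⊗ v_⊥ M_Ω dv = c₀ P_{Ω₀⊥}). Then every function of the form g = ρ M_Ω + c₀⁻¹ (v_⊥ · u) M_Ω, with ρ ∈ ℝ and u ∈ (ℝΩ₀)^⊥, satisfies L g = 0. -/

import Mathlib

open MeasureTheory Real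
open scoped RealInnerProductSpace BigOperators

noncomputable section

/-- The divergence of a vector field `F` at `v`. -/
def eDiv {d : ℕ} (F : EuclideanSpace ℝ (Fin d) → EuclideanSpace ℝ (Fin d))
    (v : EuclideanSpace ℝ (Fin d)) : ℝ :=
  ∑ i, fderiv ℝ F v (EuclideanSpace.single i (1 : ℝ)) i

lemma integrable_exp_neg_norm_sq (d : ℕ) :
    Integrable (fun v : EuclideanSpace ℝ (Fin d) => rexp (-‖v‖ ^ 2)) := by
  have h := (GaussianFourier.integrable_cexp_neg_mul_sq_norm_add (V := EuclideanSpace ℝ (Fin d))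
    (b := 1) (by norm_num) 0 0).norm
  refine h.congr (Filter.Eventually.of_forall fun v => ?_)
  simp [Complex.norm_exp, ← Complex.ofReal_pow]

lemma expquad_bound (α β s : ℝ) (hβ : 0 < β) (hs : 0 ≤ s) :
    (1 + s) * rexp (α / 2 * s - β / 4 * s ^ 2) ≤ rexp ((2 + α / 2) ^ 2 / β) * rexp (-s) := by
  have h1 : (1 + s) ≤ rexp s := by
    have := Real.add_one_le_exp s; linarith
  have key : ((2 + α / 2) * s - β / 4 * s ^ 2) * β ≤ (2 + α / 2) ^ 2 := by
    nlinarith [sq_nonneg (β * s - 2 * (2 + α / 2))]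
  have key2 : (2 + α / 2) * s - β / 4 * s ^ 2 ≤ (2 + α / 2) ^ 2 / β :=
    (le_div_iff₀ hβ).mpr key
  calc (1 + s) * rexp (α / 2 * s - β / 4 * s ^ 2)
      ≤ rexp s * rexp (α / 2 * s - β / 4 * s ^ 2) :=
        mul_le_mul_of_nonneg_right h1 (exp_nonneg _)
    _ = rexp (s + (α / 2 * s - β / 4 * s ^ 2)) := (Real.exp_add _ _).symm
    _ ≤ rexp ((2 + α / 2) ^ 2 / β + -s) := by
        apply Real.exp_le_exp.mpr; linarith
    _ = rexp ((2 + α / 2) ^ 2 / β) * rexp (-s) := Real.exp_add _ _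

/-- Kernel of the linearized operator. With
L g = div_v{ M ∇_v( g/M − c₀⁻¹ (P v)·(P j_g) ) }, c₀ = ∫ (v·Ω₀) M dv, and the symmetry
identity ∫ v ⊗ v_⊥ M dv = c₀ P_{Ω₀⊥}, every g = ρ M + c₀⁻¹ (v_⊥·u) M with u ⊥ Ω₀
satisfies L g = 0. -/
theorem kernel_of_linearized (d : ℕ) (hd : 2 ≤ d)
    (Ω₀ : EuclideanSpace ℝ (Fin d)) (hΩ₀ : ‖Ω₀‖ = 1)
    (α β Z c₀ : ℝ) (hα : 0 < α) (hβ : 0 < β) (hZ : 0 < Z)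
    (M : EuclideanSpace ℝ (Fin d) → ℝ)
    (hM : ∀ v, M v = Z⁻¹ * Real.exp (-(‖v - Ω₀‖ ^ 2 / 2 + β * ‖v‖ ^ 4 / 4 - α * ‖v‖ ^ 2 / 2)))
    (P : EuclideanSpace ℝ (Fin d) → EuclideanSpace ℝ (Fin d))
    (hP : ∀ w, P w = w - ⟪w, Ω₀⟫ • Ω₀)
    (hc₀ : c₀ = ∫ v, ⟪v, Ω₀⟫ * M v) (hc₀pos : 0 < c₀)
    (hmom : ∀ w : EuclideanSpace ℝ (Fin d), ∫ v, (⟪P v, w⟫ * M v) • v = c₀ • P w)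
    (ρ : ℝ) (u : EuclideanSpace ℝ (Fin d)) (hu : ⟪u, Ω₀⟫ = 0)
    (g : EuclideanSpace ℝ (Fin d) → ℝ)
    (hg : ∀ v, g v = ρ * M v + c₀⁻¹ * ⟪P v, u⟫ * M v)
    (jg : EuclideanSpace ℝ (Fin d)) (hjg : jg = ∫ v, g v • v) :
    ∀ v, eDiv (fun w => M w • gradient (fun z => g z / M z - c₀⁻¹ * ⟪P z, P jg⟫) w) v
      = 0 := by
  have hMpos : ∀ v, 0 < M v := fun v => by rw [hM]; positivity
  have hMcont : Continuous M := by
    rw [funext hM]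
    fun_prop
  set C : ℝ := Z⁻¹ * rexp ((2 + α / 2) ^ 2 / β) with hCdef
  have hB : ∀ v : EuclideanSpace ℝ (Fin d), M v * (1 + ‖v‖ ^ 2) ≤ C * rexp (-‖v‖ ^ 2) := by
    intro v
    rw [hM]
    have h0 : (0 : ℝ) ≤ ‖v - Ω₀‖ ^ 2 := sq_nonneg _
    have h1 : rexp (-(‖v - Ω₀‖ ^ 2 / 2 + β * ‖v‖ ^ 4 / 4 - α * ‖v‖ ^ 2 / 2))
        ≤ rexp (α / 2 * ‖v‖ ^ 2 - β / 4 * (‖v‖ ^ 2) ^ 2) := by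
      apply Real.exp_le_exp.mpr; nlinarith
    have h2 := expquad_bound α β (‖v‖ ^ 2) hβ (sq_nonneg _)
    have hZ' : (0 : ℝ) ≤ Z⁻¹ := inv_nonneg.mpr hZ.le
    calc Z⁻¹ * rexp (-(‖v - Ω₀‖ ^ 2 / 2 + β * ‖v‖ ^ 4 / 4 - α * ‖v‖ ^ 2 / 2)) * (1 + ‖v‖ ^ 2)
        = Z⁻¹ * ((1 + ‖v‖ ^ 2) * rexp (-(‖v - Ω₀‖ ^ 2 / 2 + β * ‖v‖ ^ 4 / 4 - α * ‖v‖ ^ 2 / 2))) := by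
          ring
      _ ≤ Z⁻¹ * ((1 + ‖v‖ ^ 2) * rexp (α / 2 * ‖v‖ ^ 2 - β / 4 * (‖v‖ ^ 2) ^ 2)) := by
          apply mul_le_mul_of_nonneg_left _ hZ'
          exact mul_le_mul_of_nonneg_left h1 (by positivity)
      _ ≤ Z⁻¹ * (rexp ((2 + α / 2) ^ 2 / β) * rexp (-‖v‖ ^ 2)) :=
          mul_le_mul_of_nonneg_left h2 hZ'
      _ = C * rexp (-‖v‖ ^ 2) := by rw [hCdef]; ring
  have hDom : Integrable (fun v : EuclideanSpace ℝ (Fin d) => C * rexp (-‖v‖ ^ 2)) :=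
    (integrable_exp_neg_norm_sq d).const_mul C
  have hnorm_le : ∀ v : EuclideanSpace ℝ (Fin d), ‖v‖ ≤ 1 + ‖v‖ ^ 2 := by
    intro v; nlinarith [norm_nonneg v, sq_nonneg (‖v‖ - 1)]
  have int1 : Integrable (fun v : EuclideanSpace ℝ (Fin d) => M v • v) := by
    refine hDom.mono' ((hMcont.smul continuous_id).aestronglyMeasurable) ?_
    filter_upwards with v
    rw [norm_smul, Real.norm_eq_abs, abs_of_pos (hMpos v)]
    calc M v * ‖v‖ ≤ M v * (1 + ‖v‖ ^ 2) :=
          mul_le_mul_of_nonneg_left (hnorm_le v) (hMpos v).le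
      _ ≤ C * rexp (-‖v‖ ^ 2) := hB v
  have hPcont : Continuous P := by
    rw [funext hP]
    exact continuous_id.sub (by fun_prop)
  have hPbound : ∀ v : EuclideanSpace ℝ (Fin d), |⟪P v, u⟫| ≤ 2 * ‖v‖ * ‖u‖ := by
    intro v
    have h1 : |⟪P v, u⟫| ≤ ‖P v‖ * ‖u‖ := abs_real_inner_le_norm _ _
    have h2 : ‖P v‖ ≤ 2 * ‖v‖ := by
      rw [hP]
      calc ‖v - ⟪v, Ω₀⟫ • Ω₀‖ ≤ ‖v‖ + ‖⟪v, Ω₀⟫ • Ω₀‖ := norm_sub_le _ _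
        _ = ‖v‖ + |⟪v, Ω₀⟫| * ‖Ω₀‖ := by rw [norm_smul, Real.norm_eq_abs]
        _ ≤ ‖v‖ + (‖v‖ * ‖Ω₀‖) * ‖Ω₀‖ := by
            have := abs_real_inner_le_norm v Ω₀
            nlinarith [norm_nonneg Ω₀, abs_nonneg (⟪v, Ω₀⟫)]
        _ = 2 * ‖v‖ := by rw [hΩ₀]; ring
    calc |⟪P v, u⟫| ≤ ‖P v‖ * ‖u‖ := h1
      _ ≤ 2 * ‖v‖ * ‖u‖ := mul_le_mul_of_nonneg_right h2 (norm_nonneg u)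
  have int2 : Integrable (fun v : EuclideanSpace ℝ (Fin d) => (⟪P v, u⟫ * M v) • v) := by
    have hcont : Continuous (fun v : EuclideanSpace ℝ (Fin d) => (⟪P v, u⟫ * M v) • v) :=
      (((hPcont.inner continuous_const).mul hMcont).smul continuous_id)
    refine ((hDom.const_mul (2 * ‖u‖)).mono' hcont.aestronglyMeasurable ?_)
    filter_upwards with v
    rw [norm_smul, Real.norm_eq_abs, abs_mul, abs_of_pos (hMpos v)]
    calc |⟪P v, u⟫| * M v * ‖v‖
        ≤ (2 * ‖v‖ * ‖u‖) * M v * ‖v‖ := by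
          apply mul_le_mul_of_nonneg_right _ (norm_nonneg v)
          exact mul_le_mul_of_nonneg_right (hPbound v) (hMpos v).le
      _ = 2 * ‖u‖ * (M v * (‖v‖ * ‖v‖)) := by ring
      _ ≤ 2 * ‖u‖ * (M v * (1 + ‖v‖ ^ 2)) := by
          apply mul_le_mul_of_nonneg_left _ (by positivity)
          apply mul_le_mul_of_nonneg_left _ (hMpos v).le
          nlinarith [norm_nonneg v]
      _ ≤ 2 * ‖u‖ * (C * rexp (-‖v‖ ^ 2)) :=
          mul_le_mul_of_nonneg_left (hB v) (by positivity)
  -- reflection across the line spanned by Ω₀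
  set K : Submodule ℝ (EuclideanSpace ℝ (Fin d)) := ℝ ∙ Ω₀ with hK
  set R : EuclideanSpace ℝ (Fin d) ≃ₗᵢ[ℝ] EuclideanSpace ℝ (Fin d) := Submodule.reflection K with hR
  have hRΩ : R Ω₀ = Ω₀ :=
    Submodule.reflection_mem_subspace_eq_self (Submodule.mem_span_singleton_self Ω₀)
  have hMR : ∀ v, M (R v) = M v := by
    intro v
    have h1 : ‖R v‖ = ‖v‖ := R.norm_map v
    have h2 : ‖R v - Ω₀‖ = ‖v - Ω₀‖ := by
      calc ‖R v - Ω₀‖ = ‖R (v - Ω₀)‖ := by rw [map_sub, hRΩ]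
        _ = ‖v - Ω₀‖ := R.norm_map _
    rw [hM, hM, h1, h2]
  set m : EuclideanSpace ℝ (Fin d) := ∫ v, M v • v with hm
  have hmR : R m = m := by
    have key : ∫ v, M v • R v = m := by
      have h := R.measurePreserving.integral_comp R.toHomeomorph.measurableEmbedding
        (fun v => M v • v)
      simp_rw [hMR] at h
      exact h
    calc R m = ∫ v, R (M v • v) :=
          (LinearIsometry.integral_comp_comm R.toLinearIsometry _).symm
      _ = ∫ v, M v • R v := by simp
      _ = m := key
  have hmK : m ∈ K := (Submodule.reflection_eq_self_iff (K := K) m).mp hmR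
  obtain ⟨c, hc⟩ := Submodule.mem_span_singleton.mp hmK
  have hPu : P u = u := by rw [hP, hu, zero_smul, sub_zero]
  have hint2val : ∫ v, (⟪P v, u⟫ * M v) • v = c₀ • u := by rw [hmom u, hPu]
  have hjg2 : jg = ρ • m + u := by
    rw [hjg]
    have hsplit : (fun v : EuclideanSpace ℝ (Fin d) => g v • v)
        = fun v => ρ • (M v • v) + c₀⁻¹ • ((⟪P v, u⟫ * M v) • v) := by
      funext v
      rw [hg v]
      rw [add_smul, smul_smul, smul_smul, mul_assoc]
    have i1 : Integrable (fun v : EuclideanSpace ℝ (Fin d) => ρ • (M v • v)) := int1.smul ρ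
    have i2 : Integrable (fun v : EuclideanSpace ℝ (Fin d) => c₀⁻¹ • ((⟪P v, u⟫ * M v) • v)) :=
      int2.smul c₀⁻¹
    rw [hsplit, integral_add i1 i2, integral_smul, integral_smul,
      hint2val, smul_smul, inv_mul_cancel₀ hc₀pos.ne', one_smul]
  have hjgΩ : ⟪jg, Ω₀⟫ = ρ * c := by
    rw [hjg2, ← hc, inner_add_left, hu, real_inner_smul_left, real_inner_smul_left,
      real_inner_self_eq_norm_sq, hΩ₀]
    ring
  have hPjg : P jg = u := by
    rw [hP, hjgΩ, hjg2, ← hc, smul_smul]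
    module
  have hfun : (fun z => g z / M z - c₀⁻¹ * ⟪P z, P jg⟫) = fun _ => ρ := by
    funext z
    rw [hPjg, hg z]
    field_simp [(hMpos z).ne']
    ring
  intro v
  have hfield : (fun w => M w • gradient (fun z => g z / M z - c₀⁻¹ * ⟪P z, P jg⟫) w)
      = fun _ => (0 : EuclideanSpace ℝ (Fin d)) := by
    funext w
    rw [hfun, gradient_fun_const, smul_zero]
  rw [hfield]
  simp [eDiv]
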